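/- In S = (IO∞(ℤ))ⁿ, for distinct indices i₁,…,i_m, i_{m+1}, any congruence 𝔠 with σ_[i₁,…,i_m] ⊆ 𝔠 ⊆ σ_[i₁,…,i_m,i_{m+1}] equals σ_[i₁,…,i_m] or σ_[i₁,…,i_m,i_{m+1}]. -/

import Mathlib

/-- A partial injective self-map of ℤ (encoded as a `PEquiv`) is monotone. -/
def PMono (f : ℤ ≃. ℤ) : Prop :=
  ∀ x y a b : ℤ, a ∈ f x → b ∈ f y → x ≤ y → a ≤ b

/-- Domain of a partial injective self-map of ℤ. -/
def PDom (f : ℤ ≃. ℤ) : Set ℤ := {x | (f x).isSome}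

/-- Range of a partial injective self-map of ℤ. -/
def PRan (f : ℤ ≃. ℤ) : Set ℤ := {y | (f.symm y).isSome}

/-- Membership in IO∞(ℤ): injective (built into `PEquiv`), monotone,
with cofinite domain and cofinite range. -/
def IOZ (f : ℤ ≃. ℤ) : Prop :=
  PMono f ∧ (PDom f)ᶜ.Finite ∧ (PRan f)ᶜ.Finite

/-- Idempotent element of IO∞(ℤ). -/
def IsIdem (ε : ℤ ≃. ℤ) : Prop := ε.trans ε = ε

/-- Membership in the direct power (IO∞(ℤ))ⁿ. -/
def IOZn (n : ℕ) (α : Fin n → ℤ ≃. ℤ) : Prop := ∀ i, IOZ (α i)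

/-- Coordinatewise composition on the direct power (α then β, as in the paper). -/
def mulN {n : ℕ} (α β : Fin n → ℤ ≃. ℤ) : Fin n → ℤ ≃. ℤ := fun i => (α i).trans (β i)

/-- The identity 𝕀 of (IO∞(ℤ))ⁿ. -/
def oneN (n : ℕ) : Fin n → ℤ ≃. ℤ := fun _ => PEquiv.refl ℤ

/-- εᵢ°: the tuple with ε in coordinate i and identities elsewhere. -/
def epsT {n : ℕ} (i : Fin n) (ε : ℤ ≃. ℤ) : Fin n → ℤ ≃. ℤ :=
  fun j => if j = i then ε else PEquiv.refl ℤ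

/-- A congruence on the semigroup (IO∞(ℤ))ⁿ (relative to the carrier `IOZn n`). -/
def IsCongOn (n : ℕ) (ρ : (Fin n → ℤ ≃. ℤ) → (Fin n → ℤ ≃. ℤ) → Prop) : Prop :=
  (∀ α, IOZn n α → ρ α α) ∧
  (∀ α β, IOZn n α → IOZn n β → ρ α β → ρ β α) ∧
  (∀ α β γ, IOZn n α → IOZn n β → IOZn n γ → ρ α β → ρ β γ → ρ α γ) ∧
  (∀ α β γ, IOZn n α → IOZn n β → IOZn n γ → ρ α β →
    ρ (mulN α γ) (mulN β γ) ∧ ρ (mulN γ α) (mulN γ β))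

/-- The congruence σ_[i]. -/
def sigmaI (n : ℕ) (i : Fin n) (α β : Fin n → ℤ ≃. ℤ) : Prop :=
  ∃ ε : ℤ ≃. ℤ, IOZ ε ∧ IsIdem ε ∧ mulN α (epsT i ε) = mulN β (epsT i ε)

/-- D(α,β): the set of coordinates where α and β differ. -/
def Dset {n : ℕ} (α β : Fin n → ℤ ≃. ℤ) : Set (Fin n) := {i | α i ≠ β i}

/-- Idempotent tuple. -/
def IsIdemN {n : ℕ} (ε : Fin n → ℤ ≃. ℤ) : Prop := ∀ i, (ε i).trans (ε i) = ε i

/-- σ_[i₁,…,i_k] for the set of indices t: α and β agree after right multiplication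
by a product ε°_{i₁}⋯ε°_{i_k} of idempotents supported on t. -/
def sigmaSet (n : ℕ) (t : Finset (Fin n)) (α β : Fin n → ℤ ≃. ℤ) : Prop :=
  ∃ ε : Fin n → ℤ ≃. ℤ, IOZn n ε ∧ IsIdemN ε ∧ (∀ i ∉ t, ε i = PEquiv.refl ℤ) ∧
    mulN α ε = mulN β ε

/-! ### Auxiliary material -/

open Classical in
/-- partial identity on a set -/
noncomputable def pid (s : Set ℤ) : ℤ ≃. ℤ where
  toFun x := if x ∈ s then some x else none
  invFun x := if x ∈ s then some x else none
  inv a b := by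
    by_cases hb : b ∈ s <;> by_cases ha : a ∈ s <;>
      simp [hb, ha, Option.mem_def, eq_comm] <;> rintro rfl <;> tauto

lemma pid_mem {s : Set ℤ} {x : ℤ} (h : x ∈ s) : pid s x = some x := by simp [pid, h]
lemma pid_not_mem {s : Set ℤ} {x : ℤ} (h : x ∉ s) : pid s x = none := by simp [pid, h]
lemma pid_symm (s : Set ℤ) : (pid s).symm = pid s := rfl
lemma pid_some_iff {s : Set ℤ} {x y : ℤ} : pid s x = some y ↔ y = x ∧ x ∈ s := by
  by_cases h : x ∈ s <;> simp [pid, h, eq_comm]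
lemma pid_univ : pid Set.univ = PEquiv.refl ℤ := by ext x; simp [pid, PEquiv.refl]
lemma trans_app (f g : ℤ ≃. ℤ) (x : ℤ) : (f.trans g) x = (f x).bind g := rfl
lemma pid_trans_pid (s u : Set ℤ) : (pid s).trans (pid u) = pid (s ∩ u) := by
  apply PEquiv.ext; intro x
  by_cases hs : x ∈ s <;> by_cases hu : x ∈ u <;>
    simp [trans_app, pid_mem, pid_not_mem, hs, hu, Set.mem_inter_iff, pid, Option.bind]

lemma PDom_pid (s : Set ℤ) : PDom (pid s) = s := by
  ext x; by_cases h : x ∈ s <;> simp [PDom, pid_mem, pid_not_mem, h]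

lemma idem_apply {e : ℤ ≃. ℤ} (h : IsIdem e) {x y : ℤ} (hxy : e x = some y) : y = x := by
  have h1 : (e.trans e) x = e x := by rw [h]
  rw [trans_app, hxy] at h1
  have h2 : e y = some y := h1
  have h3 : e.symm y = some y := e.eq_some_iff.2 h2
  have h4 : e.symm y = some x := e.eq_some_iff.2 hxy
  rw [h3] at h4; exact (Option.some_inj.1 h4)

lemma idem_eq_pid {e : ℤ ≃. ℤ} (h : IsIdem e) : e = pid (PDom e) := by
  apply PEquiv.ext; intro x
  rcases he : e x with _ | y
  · rw [pid_not_mem]; simp [PDom, he]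
  · have := idem_apply h he; subst this
    rw [pid_mem]; simp [PDom, he]

lemma self_trans_symm_pid (f : ℤ ≃. ℤ) : f.trans f.symm = pid (PDom f) := by
  apply PEquiv.ext; intro x
  rcases he : f x with _ | y
  · rw [trans_app, he, pid_not_mem] <;> simp [PDom, he]
  · rw [trans_app, he, pid_mem]
    · simp [f.eq_some_iff.2 he]
    · simp [PDom, he]

lemma total_trans_symm (f : ℤ ≃. ℤ) (h : ∀ x, (f x).isSome) : f.trans f.symm = PEquiv.refl ℤ := by
  rw [self_trans_symm_pid, show PDom f = Set.univ from Set.eq_univ_of_forall h, pid_univ]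

lemma IOZ_refl : IOZ (PEquiv.refl ℤ) := by
  refine ⟨fun x y a b ha hb h => ?_, ?_, ?_⟩
  · simp [PEquiv.refl, Option.mem_def] at ha hb; omega
  · convert Set.finite_empty
    simp [PDom, PEquiv.refl, Set.eq_empty_iff_forall_notMem]
  · convert Set.finite_empty
    simp [PRan, PEquiv.refl, PEquiv.symm, Set.eq_empty_iff_forall_notMem]

lemma IOZ_pid {s : Set ℤ} (h : sᶜ.Finite) : IOZ (pid s) := by
  refine ⟨fun x y a b ha hb hxy => ?_, ?_, ?_⟩
  · simp only [Option.mem_def] at ha hb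
    obtain ⟨rfl, -⟩ := pid_some_iff.1 ha
    obtain ⟨rfl, -⟩ := pid_some_iff.1 hb
    exact hxy
  · rwa [PDom_pid]
  · rw [show PRan (pid s) = PDom (pid s) from rfl, PDom_pid]; exact h

lemma IOZ_symm {f : ℤ ≃. ℤ} (h : IOZ f) : IOZ f.symm := by
  obtain ⟨hm, hd, hr⟩ := h
  refine ⟨fun x y a b ha hb hxy => ?_, hr, hd⟩
  rcases le_or_gt a b with h' | h'
  · exact h'
  · have hx : x ∈ f a := (f.mem_iff_mem).1 ha
    have hy : y ∈ f b := (f.mem_iff_mem).1 hb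
    have : y ≤ x := hm b a y x hy hx h'.le
    have hxyeq : x = y := le_antisymm hxy this
    subst hxyeq
    have := PEquiv.inj f hx hy
    omega

lemma dom_trans_cof {f g : ℤ ≃. ℤ} (hf : (PDom f)ᶜ.Finite) (hg : (PDom g)ᶜ.Finite) :
    (PDom (f.trans g))ᶜ.Finite := by
  have hsub : (PDom (f.trans g))ᶜ ⊆ (PDom f)ᶜ ∪ (fun y => (f.symm y).getD 0) '' (PDom g)ᶜ := by
    intro x hx
    simp only [Set.mem_compl_iff, PDom, Set.mem_setOf_eq, Option.isSome_iff_exists,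
      not_exists] at hx
    rcases hfx : f x with _ | m
    · left; simp [PDom, hfx]
    · right
      have hgm : g m = none := by
        rcases hgm : g m with _ | c
        · rfl
        · have hcc : (f.trans g) x = some c := by rw [trans_app, hfx]; exact hgm
          exact absurd hcc (hx c)
      refine ⟨m, by simp [PDom, hgm], ?_⟩
      simp [f.eq_some_iff.2 hfx]
  exact Set.Finite.subset (hf.union (hg.image _)) hsub

lemma IOZ_trans {f g : ℤ ≃. ℤ} (hf : IOZ f) (hg : IOZ g) : IOZ (f.trans g) := by
  obtain ⟨hmf, hdf, hrf⟩ := hf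
  obtain ⟨hmg, hdg, hrg⟩ := hg
  refine ⟨fun x y a b ha hb hxy => ?_, dom_trans_cof hdf hdg, ?_⟩
  · rw [PEquiv.mem_trans] at ha hb
    obtain ⟨m, hm1, hm2⟩ := ha
    obtain ⟨m', hm1', hm2'⟩ := hb
    exact hmg m m' a b hm2 hm2' (hmf x y m m' hm1 hm1' hxy)
  · rw [show PRan (f.trans g) = PDom ((f.trans g).symm) from rfl, PEquiv.symm_trans_rev]
    exact dom_trans_cof hrg hrf

lemma exists_bound (s : Set ℤ) (h : s.Finite) : ∃ B : ℤ, 0 ≤ B ∧ ∀ y ∈ s, -B ≤ y ∧ y ≤ B := by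
  obtain ⟨u, hu⟩ := h.bddAbove
  obtain ⟨l, hl⟩ := h.bddBelow
  refine ⟨max 0 (max u (-l)), le_max_left _ _, fun y hy => ?_⟩
  have h1 := hu hy
  have h2 := hl hy
  constructor <;> simp only [le_max_iff, max_le_iff, neg_le] <;> omega

/-- the shift -/
def shP (s : ℤ) : ℤ ≃. ℤ where
  toFun x := some (x + s)
  invFun y := some (y - s)
  inv a b := by simp only [Option.mem_def, Option.some_inj]; omega

lemma shP_apply (s x : ℤ) : shP s x = some (x + s) := rfl
lemma shP_symm_apply (s y : ℤ) : (shP s).symm y = some (y - s) := rfl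
lemma shP_total (s : ℤ) : ∀ x, (shP s x).isSome := fun _ => rfl

lemma IOZ_shP (s : ℤ) : IOZ (shP s) := by
  refine ⟨fun x y a b ha hb h => ?_, ?_, ?_⟩
  · simp only [Option.mem_def, shP_apply, Option.some_inj] at ha hb; omega
  · convert Set.finite_empty
    simp [PDom, shP, Set.eq_empty_iff_forall_notMem]
  · convert Set.finite_empty
    simp [PRan, shP, PEquiv.symm, Set.eq_empty_iff_forall_notMem]

/-- total monotone injective map with cofinite range avoiding `[-B,B]` except hitting `x₀` at 0 -/
def jump (x₀ B : ℤ) (h1 : -B ≤ x₀) (h2 : x₀ ≤ B) : ℤ ≃. ℤ where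
  toFun k := if k = 0 then some x₀ else if 0 < k then some (B + k) else some (-(B+1) + k)
  invFun y := if y = x₀ then some 0 else if B < y then some (y - B)
    else if y < -(B+1) then some (y + (B+1)) else none
  inv a b := by
    split_ifs <;> constructor <;> intro h <;> simp_all <;> omega

variable {x₀ B : ℤ} {h1 : -B ≤ x₀} {h2 : x₀ ≤ B}

lemma jump_total (x : ℤ) : ((jump x₀ B h1 h2) x).isSome := by
  simp only [jump, PEquiv.coe_mk_apply]; split_ifs <;> simp

lemma jump_zero : (jump x₀ B h1 h2) 0 = some x₀ := rfl

lemma jump_ran {x y : ℤ} (h : (jump x₀ B h1 h2) x = some y) :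
    y = x₀ ∨ B < y ∨ y < -(B+1) := by
  simp only [jump, PEquiv.coe_mk_apply] at h; split_ifs at h <;> simp_all <;> omega

lemma jump_eq_x₀ {x : ℤ} (h : (jump x₀ B h1 h2) x = some x₀) : x = 0 := by
  simp only [jump, PEquiv.coe_mk_apply] at h; split_ifs at h <;> simp_all <;> omega

lemma IOZ_jump : IOZ (jump x₀ B h1 h2) := by
  refine ⟨fun x y a b ha hb h => ?_, ?_, ?_⟩
  · simp only [Option.mem_def, jump, PEquiv.coe_mk_apply] at ha hb
    split_ifs at ha hb <;> simp_all <;> omega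
  · convert Set.finite_empty
    rw [Set.eq_empty_iff_forall_notMem]
    intro x hx
    exact hx (jump_total x)
  · apply Set.Finite.subset (Set.finite_Icc (-(B+1)) B)
    intro y hy
    simp only [Set.mem_compl_iff, PRan, Set.mem_setOf_eq, Option.isSome_iff_exists,
      not_exists] at hy
    by_contra hmem
    simp only [Set.mem_Icc, not_and_or, not_le] at hmem
    rcases hmem with hm | hm
    · exact hy (y + (B+1))
        (by simp only [jump, PEquiv.symm, PEquiv.coe_mk_apply]; split_ifs <;> simp_all <;> omega)
    · exact hy (y - B)
        (by simp only [jump, PEquiv.symm, PEquiv.coe_mk_apply]; split_ifs <;> simp_all <;> omega)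

lemma trans_pid_eq {a b : ℤ ≃. ℤ} {D : Set ℤ} (h : a.trans (pid D) = b.trans (pid D))
    {x p : ℤ} (hp : a x = some p) (hpD : p ∈ D) : b x = some p := by
  have hx : (a.trans (pid D)) x = (b.trans (pid D)) x := by rw [h]
  rw [trans_app, trans_app, hp] at hx
  simp only [Option.bind_some, pid_mem hpD] at hx
  rcases hb : b x with _ | q
  · rw [hb] at hx; simp at hx
  · rw [hb] at hx
    simp only [Option.bind_some] at hx
    obtain ⟨h1, -⟩ := pid_some_iff.1 hx.symm
    exact congrArg some h1.symm

lemma diff_finite {a b : ℤ ≃. ℤ} {D : Set ℤ} (hD : Dᶜ.Finite)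
    (h : a.trans (pid D) = b.trans (pid D)) : {x | a x ≠ b x}.Finite := by
  apply Set.Finite.subset ((hD.image (fun y => (a.symm y).getD 0)).union
    (hD.image (fun y => (b.symm y).getD 0)))
  intro x hx
  simp only [Set.mem_setOf_eq] at hx
  rcases ha : a x with _ | p
  · rcases hb : b x with _ | q
    · exact absurd (ha.trans hb.symm) hx
    · right
      have hqD : q ∉ D := fun hqD => by
        have h2 := trans_pid_eq h.symm hb hqD
        rw [ha] at h2; cases h2
      exact ⟨q, hqD, by simp [b.eq_some_iff.2 hb]⟩
  · left
    have hpD : p ∉ D := fun hpD => hx (by rw [ha, trans_pid_eq h ha hpD])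
    exact ⟨p, hpD, by simp [a.eq_some_iff.2 ha]⟩

lemma restrict_symm_pid {c d : ℤ ≃. ℤ} {x₀ p : ℤ}
    (hcd : ∀ x, x ≠ x₀ → c x = d x) (hc : c x₀ = some p) (hd : d x₀ = none) :
    d.trans c.symm = pid (PDom c \ {x₀}) := by
  apply PEquiv.ext; intro x
  by_cases hx : x = x₀
  · subst hx
    rw [trans_app, hd, pid_not_mem (by simp)]
    rfl
  · rw [trans_app, ← hcd x hx]
    rcases hcx : c x with _ | y
    · rw [pid_not_mem (by simp [PDom, hcx])]; rfl
    · rw [pid_mem (by simp [PDom, hcx, hx])]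
      simp [c.eq_some_iff.2 hcx]

lemma total_trans_pid {u : ℤ ≃. ℤ} {s : Set ℤ} (h : ∀ x, ∃ y, u x = some y ∧ y ∈ s) :
    u.trans (pid s) = u := by
  apply PEquiv.ext; intro x
  obtain ⟨y, hy, hys⟩ := h x
  rw [trans_app, hy]
  simp [pid_mem hys]

lemma conj_jump_refl {U : Set ℤ} (hran : ∀ x, ∃ y, (jump x₀ B h1 h2) x = some y ∧ y ∈ U) :
    ((jump x₀ B h1 h2).trans (pid U)).trans (jump x₀ B h1 h2).symm = PEquiv.refl ℤ := by
  rw [total_trans_pid hran, total_trans_symm _ jump_total]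

lemma conj_jump_pt {U : Set ℤ} (hran : ∀ x, ∃ y, (jump x₀ B h1 h2) x = some y ∧ y ∈ U) :
    ((jump x₀ B h1 h2).trans (pid (U \ {x₀}))).trans (jump x₀ B h1 h2).symm
      = pid ({(0:ℤ)}ᶜ) := by
  apply PEquiv.ext; intro x
  by_cases hx : x = 0
  · subst hx
    rw [trans_app, trans_app, jump_zero]
    simp only [Option.bind_some]
    rw [pid_not_mem (by simp), pid_not_mem (by simp)]
    rfl
  · obtain ⟨y, hy, hyU⟩ := hran x
    have hyne : y ≠ x₀ := fun h => hx (jump_eq_x₀ (h ▸ hy))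
    rw [trans_app, trans_app, hy]
    simp only [Option.bind_some]
    rw [pid_mem (show y ∈ U \ {x₀} from ⟨hyU, hyne⟩), pid_mem (show x ∈ ({(0:ℤ)}ᶜ : Set ℤ) by simp [hx])]
    simp [(jump x₀ B h1 h2).eq_some_iff.2 hy]

lemma conj_shP (s z : ℤ) :
    ((shP s).trans (pid ({z}ᶜ))).trans (shP s).symm = pid ({z - s}ᶜ) := by
  apply PEquiv.ext; intro x
  rw [trans_app, trans_app, shP_apply]
  simp only [Option.bind_some]
  by_cases hx : x = z - s
  · rw [pid_not_mem (show x + s ∉ ({z}ᶜ : Set ℤ) by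
      simp only [Set.mem_compl_iff, Set.mem_singleton_iff, not_not]; omega)]
    rw [pid_not_mem (show x ∉ ({z - s}ᶜ : Set ℤ) by
      simp only [Set.mem_compl_iff, Set.mem_singleton_iff, not_not]; omega)]
    rfl
  · rw [pid_mem (show x + s ∈ ({z}ᶜ : Set ℤ) by
      simp only [Set.mem_compl_iff, Set.mem_singleton_iff]; omega)]
    simp only [Option.bind_some]
    rw [shP_symm_apply, pid_mem (show x ∈ ({z - s}ᶜ : Set ℤ) by
      simp only [Set.mem_compl_iff, Set.mem_singleton_iff]; omega)]
    congr 1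
    omega

lemma conj_shP_refl (s : ℤ) :
    ((shP s).trans (PEquiv.refl ℤ)).trans (shP s).symm = PEquiv.refl ℤ := by
  rw [PEquiv.trans_refl, total_trans_symm _ (shP_total s)]

/-! tuple level -/

lemma epsT_refl {n : ℕ} (j : Fin n) : epsT j (PEquiv.refl ℤ) = oneN n :=
  funext fun k => by unfold epsT oneN; split <;> rfl

lemma IOZn_oneN (n : ℕ) : IOZn n (oneN n) := fun _ => IOZ_refl

lemma IOZn_epsT {n : ℕ} (j : Fin n) {x : ℤ ≃. ℤ} (h : IOZ x) : IOZn n (epsT j x) := by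
  intro k
  show IOZ (if k = j then x else PEquiv.refl ℤ)
  split_ifs
  exacts [h, IOZ_refl]

lemma IOZn_mulN {n : ℕ} {α β : Fin n → ℤ ≃. ℤ} (hα : IOZn n α) (hβ : IOZn n β) :
    IOZn n (mulN α β) := fun k => IOZ_trans (hα k) (hβ k)

lemma mulN_oneN {n : ℕ} (α : Fin n → ℤ ≃. ℤ) : mulN α (oneN n) = α :=
  funext fun _ => PEquiv.trans_refl _

lemma oneN_mulN {n : ℕ} (α : Fin n → ℤ ≃. ℤ) : mulN (oneN n) α = α :=
  funext fun _ => PEquiv.refl_trans _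

lemma epsT_mul {n : ℕ} (j : Fin n) (x y : ℤ ≃. ℤ) :
    mulN (epsT j x) (epsT j y) = epsT j (x.trans y) := by
  funext k
  by_cases hk : k = j
  · simp [mulN, epsT, hk]
  · simp [mulN, epsT, hk, PEquiv.trans_refl]

/-- the tuple with x at j and β elsewhere -/
def TtD {n : ℕ} (j : Fin n) (β : Fin n → ℤ ≃. ℤ) (x : ℤ ≃. ℤ) : Fin n → ℤ ≃. ℤ :=
  fun k => if k = j then x else β k

lemma TtD_self {n : ℕ} (j : Fin n) (β : Fin n → ℤ ≃. ℤ) : TtD j β (β j) = β :=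
  funext fun k => by unfold TtD; split_ifs with h; exacts [h ▸ rfl, rfl]

lemma IOZn_TtD {n : ℕ} {j : Fin n} {β : Fin n → ℤ ≃. ℤ} (hβ : IOZn n β) {x : ℤ ≃. ℤ}
    (hx : IOZ x) : IOZn n (TtD j β x) := by
  intro k
  show IOZ (if k = j then x else β k)
  split_ifs
  exacts [hx, hβ k]

lemma TtD_mulR {n : ℕ} (j : Fin n) (β : Fin n → ℤ ≃. ℤ) (x y : ℤ ≃. ℤ) :
    mulN (TtD j β x) (epsT j y) = TtD j β (x.trans y) := by
  funext k
  by_cases hk : k = j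
  · simp [mulN, epsT, TtD, hk]
  · simp [mulN, epsT, TtD, hk, PEquiv.trans_refl]

lemma TtD_mulL {n : ℕ} (j : Fin n) (β : Fin n → ℤ ≃. ℤ) (x y : ℤ ≃. ℤ) :
    mulN (epsT j y) (TtD j β x) = TtD j β (y.trans x) := by
  funext k
  by_cases hk : k = j
  · simp [mulN, epsT, TtD, hk]
  · simp [mulN, epsT, TtD, hk, PEquiv.refl_trans]

/-- any congruence between σ_[i₁,…,i_m] and σ_[i₁,…,i_m,i_{m+1}]
equals one of them. -/
theorem stmt17 (n : ℕ) (t : Finset (Fin n)) (j : Fin n) (hj : j ∉ t)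
    (ρ : (Fin n → ℤ ≃. ℤ) → (Fin n → ℤ ≃. ℤ) → Prop) (hρ : IsCongOn n ρ)
    (hlow : ∀ α β, IOZn n α → IOZn n β → sigmaSet n t α β → ρ α β)
    (hhigh : ∀ α β, IOZn n α → IOZn n β → ρ α β → sigmaSet n (insert j t) α β) :
    (∀ α β, IOZn n α → IOZn n β → (ρ α β ↔ sigmaSet n t α β)) ∨
    (∀ α β, IOZn n α → IOZn n β → (ρ α β ↔ sigmaSet n (insert j t) α β)) := by
  classical
  obtain ⟨hrfl, hsym, htrn, hcmp⟩ := hρ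
  by_cases hcase : ∀ α β, IOZn n α → IOZn n β → ρ α β → sigmaSet n t α β
  · exact Or.inl fun α β hα hβ => ⟨hcase α β hα hβ, hlow α β hα hβ⟩
  right
  push_neg at hcase
  obtain ⟨α₀, β₀, hα₀, hβ₀, hr0, hnot⟩ := hcase
  obtain ⟨ε, hεI, hεid, hεoff, hεeq⟩ := hhigh α₀ β₀ hα₀ hβ₀ hr0
  have hco : ∀ k, (α₀ k).trans (ε k) = (β₀ k).trans (ε k) := fun k => congrFun hεeq k
  have hout : ∀ k, k ∉ t → k ≠ j → α₀ k = β₀ k := by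
    intro k hkt hkj
    have h0 := hco k
    rw [hεoff k (by simp [hkt, hkj]), PEquiv.trans_refl, PEquiv.trans_refl] at h0
    exact h0
  -- step 1 : a pair differing only at coordinate j
  have hσ1 : sigmaSet n t α₀ (TtD j β₀ (α₀ j)) := by
    refine ⟨fun k => if k ∈ t then ε k else PEquiv.refl ℤ, ?_, ?_, ?_, ?_⟩
    · intro k; dsimp only; split_ifs; exacts [hεI k, IOZ_refl]
    · intro k; dsimp only; split_ifs; exacts [hεid k, PEquiv.trans_refl _]
    · intro k hk; simp [hk]
    · funext k
      show (α₀ k).trans (if k ∈ t then ε k else _) = (TtD j β₀ (α₀ j) k).trans _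
      by_cases hkt : k ∈ t
      · have hkj : k ≠ j := fun h => hj (h ▸ hkt)
        simp only [TtD, if_neg hkj, if_pos hkt]
        exact hco k
      · simp only [if_neg hkt, PEquiv.trans_refl]
        by_cases hkj : k = j
        · subst hkj; simp [TtD]
        · simp only [TtD, if_neg hkj]
          exact hout k hkt hkj
  have hTaI : IOZn n (TtD j β₀ (α₀ j)) := IOZn_TtD hβ₀ (hα₀ j)
  have hrab' : ρ (TtD j β₀ (α₀ j)) β₀ :=
    htrn _ _ _ hTaI hα₀ hβ₀ (hsym _ _ hα₀ hTaI (hlow _ _ hα₀ hTaI hσ1)) hr0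
  have hrab : ρ (TtD j β₀ (α₀ j)) (TtD j β₀ (β₀ j)) := by rwa [TtD_self]
  have hane : α₀ j ≠ β₀ j := by
    intro h
    exact hnot (by rw [show TtD j β₀ (α₀ j) = β₀ by rw [h, TtD_self]] at hσ1; exact hσ1)
  have hD : (PDom (ε j))ᶜ.Finite := (hεI j).2.1
  have hab_e : (α₀ j).trans (pid (PDom (ε j))) = (β₀ j).trans (pid (PDom (ε j))) := by
    rw [← idem_eq_pid (hεid j)]; exact hco j
  have hdiffF : {x | α₀ j x ≠ β₀ j x}.Finite := diff_finite hD hab_e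
  have hex : ∃ x₀, α₀ j x₀ ≠ β₀ j x₀ := by
    by_contra h; push_neg at h; exact hane (PEquiv.ext h)
  obtain ⟨x₀, hx₀⟩ := hex
  -- restrict to a single difference point
  have hWc : (({x | α₀ j x ≠ β₀ j x} \ {x₀})ᶜ)ᶜ.Finite := by
    rw [compl_compl]; exact hdiffF.diff
  set W : Set ℤ := ({x | α₀ j x ≠ β₀ j x} \ {x₀})ᶜ with hWdef
  set a₁ : ℤ ≃. ℤ := (pid W).trans (α₀ j) with ha₁def
  set b₁ : ℤ ≃. ℤ := (pid W).trans (β₀ j) with hb₁def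
  have hx₀W : x₀ ∈ W := by simp [hWdef]
  have ha₁x : a₁ x₀ = α₀ j x₀ := by rw [ha₁def, trans_app, pid_mem hx₀W]; rfl
  have hb₁x : b₁ x₀ = β₀ j x₀ := by rw [hb₁def, trans_app, pid_mem hx₀W]; rfl
  have hsame : ∀ x, x ≠ x₀ → a₁ x = b₁ x := by
    intro x hx
    by_cases hxW : x ∈ W
    · have hfix : α₀ j x = β₀ j x := by
        by_contra hne
        exact hxW ⟨hne, hx⟩
      rw [ha₁def, hb₁def, trans_app, trans_app, pid_mem hxW]
      simp [hfix]
    · rw [ha₁def, hb₁def, trans_app, trans_app, pid_not_mem hxW]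
      rfl
  have hdiff₁ : a₁ x₀ ≠ b₁ x₀ := by rw [ha₁x, hb₁x]; exact hx₀
  have ha₁I : IOZ a₁ := IOZ_trans (IOZ_pid hWc) (hα₀ j)
  have hb₁I : IOZ b₁ := IOZ_trans (IOZ_pid hWc) (hβ₀ j)
  have hr1 : ρ (TtD j β₀ a₁) (TtD j β₀ b₁) := by
    have := (hcmp _ _ (epsT j (pid W)) hTaI (by rw [TtD_self]; exact hβ₀)
      (IOZn_epsT j (IOZ_pid hWc)) hrab).2
    rwa [TtD_mulL, TtD_mulL] at this
  have hTI : ∀ {x : ℤ ≃. ℤ}, IOZ x → IOZn n (TtD j β₀ x) := fun hx => IOZn_TtD hβ₀ hx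
  have hpid0 : ((({(0:ℤ)}ᶜ : Set ℤ))ᶜ).Finite := by
    rw [compl_compl]; exact Set.finite_singleton 0
  -- KEY step: from a single-point difference produce the pair (𝕀, 1_{ℤ∖{0}} at j)
  have hkey1 : ∀ c d p, IOZ c → IOZ d → (∀ x, x ≠ x₀ → c x = d x) → c x₀ = some p →
      d x₀ = none → ρ (TtD j β₀ c) (TtD j β₀ d) →
      ρ (oneN n) (epsT j (pid ({(0:ℤ)}ᶜ))) := by
    intro c d p hc hd hcd hcx hdx hr
    have hUc : (PDom c)ᶜ.Finite := hc.2.1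
    have hU'c : (PDom c \ {x₀})ᶜ.Finite := by
      have hss : (PDom c \ {x₀})ᶜ ⊆ (PDom c)ᶜ ∪ {x₀} := by
        intro y hy; simp [Set.mem_diff] at hy ⊢; tauto
      exact (hUc.union (Set.finite_singleton x₀)).subset hss
    obtain ⟨B, hB0, hBb⟩ := exists_bound ((PDom c)ᶜ ∪ {x₀}) (hUc.union (Set.finite_singleton x₀))
    have hbb1 : -B ≤ x₀ := (hBb x₀ (Or.inr rfl)).1
    have hbb2 : x₀ ≤ B := (hBb x₀ (Or.inr rfl)).2
    have hx₀U : x₀ ∈ PDom c := by simp [PDom, hcx]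
    have huran : ∀ x, ∃ y, (jump x₀ B hbb1 hbb2) x = some y ∧ y ∈ PDom c := by
      intro x
      obtain ⟨y, hy⟩ := Option.isSome_iff_exists.1 (jump_total x)
      refine ⟨y, hy, ?_⟩
      rcases jump_ran hy with h | h | h
      · exact h ▸ hx₀U
      · by_contra hyU; have := hBb y (Or.inl hyU); omega
      · by_contra hyU; have := hBb y (Or.inl hyU); omega
    have hr2 : ρ (TtD j β₀ (pid (PDom c))) (TtD j β₀ (pid (PDom c \ {x₀}))) := by
      have := (hcmp _ _ (epsT j c.symm) (hTI hc) (hTI hd) (IOZn_epsT j (IOZ_symm hc)) hr).1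
      rwa [TtD_mulR, TtD_mulR, self_trans_symm_pid, restrict_symm_pid hcd hcx hdx] at this
    have hr3 : ρ (TtD j β₀ (PEquiv.refl ℤ)) (TtD j β₀ (pid ({(0:ℤ)}ᶜ))) := by
      have s1 := (hcmp _ _ (epsT j (jump x₀ B hbb1 hbb2)) (hTI (IOZ_pid hUc))
        (hTI (IOZ_pid hU'c)) (IOZn_epsT j IOZ_jump) hr2).2
      rw [TtD_mulL, TtD_mulL] at s1
      have s2 := (hcmp _ _ (epsT j (jump x₀ B hbb1 hbb2).symm)
        (hTI (IOZ_trans IOZ_jump (IOZ_pid hUc))) (hTI (IOZ_trans IOZ_jump (IOZ_pid hU'c)))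
        (IOZn_epsT j (IOZ_symm IOZ_jump)) s1).1
      rw [TtD_mulR, TtD_mulR, conj_jump_refl huran, conj_jump_pt huran] at s2
      exact s2
    -- normalize the off-j coordinates to identities
    have hwch : ∀ k : Fin n, ∃ w : ℤ ≃. ℤ, IOZ w ∧ ∀ x, ∃ y, w x = some y ∧ y ∈ PDom (β₀ k) := by
      intro k
      obtain ⟨B', hB'0, hB'b⟩ := exists_bound ((PDom (β₀ k))ᶜ) ((hβ₀ k).2.1)
      refine ⟨jump (B'+1) (B'+1) (by omega) (by omega), IOZ_jump, ?_⟩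
      intro x
      obtain ⟨y, hy⟩ := Option.isSome_iff_exists.1 (jump_total x)
      refine ⟨y, hy, ?_⟩
      by_contra hyP
      have := hB'b y hyP
      rcases jump_ran hy with h | h | h <;> omega
    choose w hwI hwt using hwch
    have hwβtot : ∀ k, ∀ x, (((w k).trans (β₀ k)) x).isSome := by
      intro k x
      obtain ⟨y, hy, hyP⟩ := hwt k x
      rw [trans_app, hy]
      exact hyP
    have hcomp1 : ∀ x : ℤ ≃. ℤ,
        mulN (mulN (fun k => if k = j then PEquiv.refl ℤ else w k) (TtD j β₀ x))
          (fun k => if k = j then PEquiv.refl ℤ else ((w k).trans (β₀ k)).symm) = epsT j x := by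
      intro x
      funext k
      by_cases hk : k = j
      · simp [mulN, TtD, epsT, hk, PEquiv.refl_trans, PEquiv.trans_refl]
      · simp only [mulN, TtD, epsT, if_neg hk]
        exact total_trans_symm _ (hwβtot k)
    have hLI : IOZn n (fun k => if k = j then PEquiv.refl ℤ else w k) := by
      intro k; dsimp only; split_ifs; exacts [IOZ_refl, hwI k]
    have hRI : IOZn n (fun k => if k = j then PEquiv.refl ℤ else ((w k).trans (β₀ k)).symm) := by
      intro k; dsimp only; split_ifs; exacts [IOZ_refl, IOZ_symm (IOZ_trans (hwI k) (hβ₀ k))]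
    have s3 := (hcmp _ _ _ (hTI IOZ_refl) (hTI (IOZ_pid hpid0)) hLI hr3).2
    have s4 := (hcmp _ _ _ (IOZn_mulN hLI (hTI IOZ_refl))
      (IOZn_mulN hLI (hTI (IOZ_pid hpid0))) hRI s3).1
    rw [hcomp1, hcomp1, epsT_refl] at s4
    exact s4
  -- produce the basic pair
  have h0 : ρ (oneN n) (epsT j (pid ({(0:ℤ)}ᶜ))) := by
    rcases hA : a₁ x₀ with _ | p
    · rcases hB : b₁ x₀ with _ | q
      · exact absurd (hA.trans hB.symm) hdiff₁
      · exact hkey1 b₁ a₁ q hb₁I ha₁I (fun x hx => (hsame x hx).symm) hB hA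
          (hsym _ _ (IOZn_TtD hβ₀ ha₁I) (IOZn_TtD hβ₀ hb₁I) hr1)
    · rcases hB : b₁ x₀ with _ | q
      · exact hkey1 a₁ b₁ p ha₁I hb₁I hsame hA hB hr1
      · have hpq : p ≠ q := fun h => hdiff₁ (by rw [hA, hB, h])
        have hqfin : ((({q}ᶜ : Set ℤ))ᶜ).Finite := by
          rw [compl_compl]; exact Set.finite_singleton q
        have ha₂ : (a₁.trans (pid ({q}ᶜ))) x₀ = some p := by
          rw [trans_app, hA]
          simp [pid_mem (show p ∈ ({q}ᶜ : Set ℤ) by simp [hpq])]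
        have hb₂ : (b₁.trans (pid ({q}ᶜ))) x₀ = none := by
          rw [trans_app, hB]
          simp [pid_not_mem (show q ∉ ({q}ᶜ : Set ℤ) by simp)]
        have hsame₂ : ∀ x, x ≠ x₀ → (a₁.trans (pid ({q}ᶜ))) x = (b₁.trans (pid ({q}ᶜ))) x := by
          intro x hx
          exact congrArg (fun o : Option ℤ => o.bind (pid ({q}ᶜ))) (hsame x hx)
        have hr2 : ρ (TtD j β₀ (a₁.trans (pid ({q}ᶜ)))) (TtD j β₀ (b₁.trans (pid ({q}ᶜ)))) := by
          have := (hcmp _ _ (epsT j (pid ({q}ᶜ))) (IOZn_TtD hβ₀ ha₁I) (IOZn_TtD hβ₀ hb₁I)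
            (IOZn_epsT j (IOZ_pid hqfin)) hr1).1
          rwa [TtD_mulR, TtD_mulR] at this
        exact hkey1 _ _ p (IOZ_trans ha₁I (IOZ_pid hqfin)) (IOZ_trans hb₁I (IOZ_pid hqfin))
          hsame₂ ha₂ hb₂ hr2
  -- move the hole around and multiply up
  have hkey2 : ∀ z : ℤ, ρ (oneN n) (epsT j (pid ({z}ᶜ))) := by
    intro z
    have h0' := h0
    rw [← epsT_refl j] at h0'
    have s1 := (hcmp _ _ (epsT j (shP (-z))) (IOZn_epsT j IOZ_refl)
      (IOZn_epsT j (IOZ_pid hpid0)) (IOZn_epsT j (IOZ_shP (-z))) h0').2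
    rw [epsT_mul, epsT_mul] at s1
    have s2 := (hcmp _ _ (epsT j (shP (-z)).symm)
      (IOZn_epsT j (IOZ_trans (IOZ_shP (-z)) IOZ_refl))
      (IOZn_epsT j (IOZ_trans (IOZ_shP (-z)) (IOZ_pid hpid0)))
      (IOZn_epsT j (IOZ_symm (IOZ_shP (-z)))) s1).1
    rw [epsT_mul, epsT_mul, conj_shP_refl, conj_shP, epsT_refl,
      show (0:ℤ) - -z = z by ring] at s2
    exact s2
  have hkey3 : ∀ F : Finset ℤ, ρ (oneN n) (epsT j (pid ((↑F : Set ℤ)ᶜ))) := by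
    intro F
    induction F using Finset.induction_on with
    | empty =>
      rw [show ((↑(∅ : Finset ℤ) : Set ℤ))ᶜ = Set.univ by simp, pid_univ, epsT_refl]
      exact hrfl _ (IOZn_oneN n)
    | @insert z F hzF ih =>
      have hzfin : ((({z}ᶜ : Set ℤ))ᶜ).Finite := by
        rw [compl_compl]; exact Set.finite_singleton z
      have hFfin : (((↑F : Set ℤ)ᶜ)ᶜ).Finite := by
        rw [compl_compl]; exact F.finite_toSet
      have hFzfin : (((↑(insert z F) : Set ℤ)ᶜ)ᶜ).Finite := by
        rw [compl_compl]; exact (insert z F).finite_toSet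
      have s1 := (hcmp _ _ (epsT j (pid ({z}ᶜ))) (IOZn_oneN n)
        (IOZn_epsT j (IOZ_pid hFfin)) (IOZn_epsT j (IOZ_pid hzfin)) ih).1
      rw [oneN_mulN, epsT_mul, pid_trans_pid,
        show ((↑F : Set ℤ)ᶜ ∩ {z}ᶜ) = (↑(insert z F) : Set ℤ)ᶜ by
          ext y; simp; tauto] at s1
      exact htrn _ _ _ (IOZn_oneN n) (IOZn_epsT j (IOZ_pid hzfin))
        (IOZn_epsT j (IOZ_pid hFzfin)) (hkey2 z) s1
  have hkey4 : ∀ s : Set ℤ, sᶜ.Finite → ρ (oneN n) (epsT j (pid s)) := by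
    intro s hs
    have := hkey3 hs.toFinset
    rwa [Set.Finite.coe_toFinset, compl_compl] at this
  -- finish : ρ coincides with σ_{t ∪ {j}}
  intro γ δ hγ hδ
  refine ⟨fun h => hhigh γ δ hγ hδ h, fun hσ => ?_⟩
  obtain ⟨ζ, hζI, hζid, hζoff, hζeq⟩ := hσ
  have hζco : ∀ k, (γ k).trans (ζ k) = (δ k).trans (ζ k) := fun k => congrFun hζeq k
  have hηI : IOZn n (TtD j δ (γ j)) := IOZn_TtD hδ (hγ j)
  have hγη : ρ γ (TtD j δ (γ j)) := by
    apply hlow γ _ hγ hηI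
    refine ⟨fun k => if k ∈ t then ζ k else PEquiv.refl ℤ, ?_, ?_, ?_, ?_⟩
    · intro k; dsimp only; split_ifs; exacts [hζI k, IOZ_refl]
    · intro k; dsimp only; split_ifs; exacts [hζid k, PEquiv.trans_refl _]
    · intro k hk; simp [hk]
    · funext k
      show (γ k).trans (if k ∈ t then ζ k else _) = (TtD j δ (γ j) k).trans _
      by_cases hkt : k ∈ t
      · have hkj : k ≠ j := fun h => hj (h ▸ hkt)
        simp only [TtD, if_neg hkj, if_pos hkt]
        exact hζco k
      · simp only [if_neg hkt, PEquiv.trans_refl]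
        by_cases hkj : k = j
        · subst hkj; simp [TtD]
        · simp only [TtD, if_neg hkj]
          have h0 := hζco k
          rw [hζoff k (by simp [hkt, hkj]), PEquiv.trans_refl, PEquiv.trans_refl] at h0
          exact h0
  have hDζ : (PDom (ζ j))ᶜ.Finite := (hζI j).2.1
  have h5 := hkey4 (PDom (ζ j)) hDζ
  have hEI : IOZn n (epsT j (pid (PDom (ζ j)))) := IOZn_epsT j (IOZ_pid hDζ)
  have hη5 : ρ (TtD j δ (γ j)) (mulN (TtD j δ (γ j)) (epsT j (pid (PDom (ζ j))))) := by
    have := (hcmp _ _ (TtD j δ (γ j)) (IOZn_oneN n) hEI hηI h5).2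
    rwa [mulN_oneN] at this
  have hδ5 : ρ δ (mulN δ (epsT j (pid (PDom (ζ j))))) := by
    have := (hcmp _ _ δ (IOZn_oneN n) hEI hδ h5).2
    rwa [mulN_oneN] at this
  have hmoot : mulN (TtD j δ (γ j)) (epsT j (pid (PDom (ζ j)))) =
      mulN δ (epsT j (pid (PDom (ζ j)))) := by
    funext k
    by_cases hk : k = j
    · subst hk
      have h0 := hζco k
      rw [idem_eq_pid (hζid k)] at h0
      simpa [mulN, TtD, epsT] using h0
    · show ((TtD j δ (γ j)) k).trans _ = (δ k).trans _
      simp [TtD, epsT, hk, PEquiv.trans_refl]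
  have hchain := htrn _ _ _ hγ hηI (IOZn_mulN hηI hEI) hγη hη5
  rw [hmoot] at hchain
  exact htrn _ _ _ hγ (IOZn_mulN hδ hEI) hδ hchain
    (hsym _ _ hδ (IOZn_mulN hδ hEI) hδ5)
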